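/- Let k, l be natural numbers and let f : PEquiv (Fin k) (Fin l) be a partial equivalence (a rook diagram). Then there exist a monotone partial equivalence p : PEquiv (Fin k) (Fin l) and a permutation σ of Fin l such that f = p.trans σ.toPEquiv. (Diagrammatically: every rook diagram D has a decomposition D = S ∘ P where S is a permutation diagram and P is a planar rook diagram.) -/

import Mathlib

/-- A rook matrix: every entry is 0 or 1, and there is at most one entry
equal to 1 in each row and in each column. -/
def IsRookMatrix {l k : ℕ} {R : Type*} [CommRing R]
    (A : Matrix (Fin l) (Fin k) R) : Prop :=
  (∀ i j, A i j = 0 ∨ A i j = 1) ∧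
  (∀ i j j', A i j = 1 → A i j' = 1 → j = j') ∧
  (∀ i i' j, A i j = 1 → A i' j = 1 → i = i')

/-- Pseudo-echelon form: if rows `i < i'` contain nonzero entries in columns
`j` and `j'` respectively, then `j < j'`. -/
def IsPseudoEchelon {l k : ℕ} {R : Type*} [CommRing R]
    (A : Matrix (Fin l) (Fin k) R) : Prop :=
  ∀ i i' j j', i < i' → A i j ≠ 0 → A i' j' ≠ 0 → j < j'

/-- A permutation matrix: the 0–1 matrix of some permutation `σ`, with
entry 1 exactly in the positions `(σ j, j)`. -/
def IsPermMatrix {n : ℕ} {R : Type*} [CommRing R]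
    (S : Matrix (Fin n) (Fin n) R) : Prop :=
  ∃ σ : Equiv.Perm (Fin n), ∀ i j, S i j = if i = σ j then 1 else 0

/-- The matrix `[f]` associated to a partial equivalence (rook diagram)
`f : PEquiv (Fin k) (Fin l)`: the `(q, p)` entry is 1 if `f p = q` and 0
otherwise. -/
def rookMatrixOf {k l : ℕ} (R : Type*) [CommRing R]
    (f : PEquiv (Fin k) (Fin l)) : Matrix (Fin l) (Fin k) R :=
  fun q p => if f p = some q then 1 else 0

/-- A partial equivalence (rook diagram) is monotone (planar) if for all
`p, q` in its domain, `p < q` implies `f p < f q`. -/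
def IsMonotonePE {k l : ℕ} (f : PEquiv (Fin k) (Fin l)) : Prop :=
  ∀ p q i j, i ∈ f p → j ∈ f q → p < q → i < j

theorem rook_eq_planar_then_perm {k l : ℕ} (f : PEquiv (Fin k) (Fin l)) :
    ∃ (p : PEquiv (Fin k) (Fin l)) (σ : Equiv.Perm (Fin l)),
      IsMonotonePE p ∧ f = p.trans σ.toPEquiv := by
  classical
  set s : Finset (Fin k) := Finset.univ.filter (fun x => (f x).isSome) with hs
  have mem_s : ∀ x, x ∈ s ↔ (f x).isSome := by
    intro x; simp [hs]
  set n := s.card with hn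
  have e : Fin n ≃o s := s.orderIsoOfFin rfl
  have hget : ∀ x (h : x ∈ s), f x = some ((f x).get ((mem_s x).1 h)) := by
    intro x h; simp
  have ginj : Function.Injective (fun x : s => (f x).get ((mem_s x).1 x.2)) := by
    intro a b hab
    ext1
    refine f.inj (b := (f (b:Fin k)).get ((mem_s b).1 b.2)) ?_ ?_
    · rw [Option.mem_def, hget a a.2]; exact congrArg some hab
    · simp
  have hnl : n ≤ l := by
    have := Fintype.card_le_of_injective _ ginj
    simpa [hn] using this
  set t : Finset (Fin l) := Finset.univ.filter (fun y => (f.symm y).isSome) with ht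
  have mem_t : ∀ y, y ∈ t ↔ (f.symm y).isSome := by intro y; simp [ht]
  have hft : ∀ x (h : x ∈ s), (f x).get ((mem_s x).1 h) ∈ t := by
    intro x h
    rw [mem_t, Option.isSome_iff_exists]
    exact ⟨x, (f.mem_iff_mem).2 (by simp)⟩
  have hEex : ∃ E : {x // x ∈ s} ≃ {y // y ∈ t},
      ∀ x : {x // x ∈ s}, (E x : Fin l) = (f (x : Fin k)).get ((mem_s _).1 x.2) := by
    have hginj : Function.Injective
        (fun x : {x // x ∈ s} => (⟨(f (x : Fin k)).get ((mem_s _).1 x.2), hft _ x.2⟩ : {y // y ∈ t})) := by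
      intro a b hab
      exact ginj (Subtype.ext_iff.1 hab)
    have hgsurj : Function.Surjective
        (fun x : {x // x ∈ s} => (⟨(f (x : Fin k)).get ((mem_s _).1 x.2), hft _ x.2⟩ : {y // y ∈ t})) := by
      rintro ⟨y, hy⟩
      obtain ⟨x, hx⟩ := Option.isSome_iff_exists.1 ((mem_t y).1 hy)
      have hfx : y ∈ f x := (f.mem_iff_mem).1 hx
      have hxs : x ∈ s := (mem_s x).2 (Option.isSome_iff_exists.2 ⟨y, hfx⟩)
      refine ⟨⟨x, hxs⟩, ?_⟩
      apply Subtype.ext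
      simp only
      have h5 := Option.mem_def.1 hfx
      simp [h5]
    exact ⟨Equiv.ofBijective _ ⟨hginj, hgsurj⟩, fun x => rfl⟩
  obtain ⟨E, hE⟩ := hEex
  have he2ex : ∃ e2 : {y : Fin l // (y : ℕ) < n} ≃ {y : Fin l // y ∈ t},
      ∀ (y : Fin l) (h : (y : ℕ) < n),
        (e2 ⟨y, h⟩ : Fin l) = (f ((e ⟨(y : ℕ), h⟩ : {x // x ∈ s}) : Fin k)).get
          ((mem_s _).1 (e ⟨(y : ℕ), h⟩).2) := by
    refine ⟨(⟨fun i => ⟨Fin.castLE hnl i, by simp⟩, fun y => ⟨(y : Fin l), y.2⟩,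
      fun i => by apply Fin.ext; simp, fun y => by apply Subtype.ext; apply Fin.ext; simp⟩ :
        Fin n ≃ {y : Fin l // (y : ℕ) < n}).symm.trans (e.toEquiv.trans E), fun y h => ?_⟩
    simp only [Equiv.trans_apply]
    rw [hE]
    rfl
  obtain ⟨e2, he2⟩ := he2ex
  -- the planar part
  refine ⟨⟨fun x => if h : x ∈ s then some (Fin.castLE hnl (e.symm ⟨x, h⟩)) else none,
          fun y => if h : (y : ℕ) < n then some ((e ⟨(y : ℕ), h⟩ : s) : Fin k) else none,
          ?_⟩, e2.extendSubtype, ?_, ?_⟩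
  · intro a b
    constructor
    · intro hab
      by_cases h : (b : ℕ) < n
      · simp only [dif_pos h, Option.mem_def, Option.some_inj] at hab
        subst hab
        have hmem : ((e ⟨(b : ℕ), h⟩ : s) : Fin k) ∈ s := (e ⟨(b : ℕ), h⟩).2
        simp only [Option.mem_def, dif_pos hmem]
        congr 1
        apply Fin.ext
        simp
      · simp [dif_neg h] at hab
    · intro hab
      by_cases h : a ∈ s
      · simp only [dif_pos h, Option.mem_def, Option.some_inj] at hab
        subst hab
        have h2 : ((Fin.castLE hnl (e.symm ⟨a, h⟩) : Fin l) : ℕ) < n := by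
          simpa using (e.symm ⟨a, h⟩).isLt
        simp only [Option.mem_def, dif_pos h2]
        congr 1
        have : (⟨((Fin.castLE hnl (e.symm ⟨a, h⟩) : Fin l) : ℕ), h2⟩ : Fin n) = e.symm ⟨a, h⟩ :=
          Fin.ext (by simp)
        rw [this]; simp
      · simp [dif_neg h] at hab
  · -- monotonicity
    intro a b i j hi hj hab
    by_cases ha : a ∈ s
    · by_cases hb : b ∈ s
      · simp only [PEquiv.coe_mk_apply, dif_pos ha, Option.mem_def, Option.some_inj] at hi
        simp only [PEquiv.coe_mk_apply, dif_pos hb, Option.mem_def, Option.some_inj] at hj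
        subst hi; subst hj
        have h3 : e.symm ⟨a, ha⟩ < e.symm ⟨b, hb⟩ := by
          rw [OrderIso.lt_iff_lt]
          exact Subtype.mk_lt_mk.2 hab
        exact Fin.strictMono_castLE hnl h3
      · simp [PEquiv.coe_mk_apply, dif_neg hb] at hj
    · simp [PEquiv.coe_mk_apply, dif_neg ha] at hi
  · -- equality
    apply PEquiv.ext
    intro a
    simp only [PEquiv.trans, PEquiv.coe_mk_apply, PEquiv.coe_mk]
    by_cases h : a ∈ s
    · rw [dif_pos h, Option.bind_some, Equiv.toPEquiv_apply]
      have hlt : ((Fin.castLE hnl (e.symm ⟨a, h⟩) : Fin l) : ℕ) < n := by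
        simpa using (e.symm ⟨a, h⟩).isLt
      rw [Equiv.extendSubtype_apply_of_mem e2 _ hlt, he2 _ hlt]
      have harg : (e ⟨((Fin.castLE hnl (e.symm ⟨a, h⟩) : Fin l) : ℕ), hlt⟩ : {x // x ∈ s}) = ⟨a, h⟩ := by
        have h6 : (⟨((Fin.castLE hnl (e.symm ⟨a, h⟩) : Fin l) : ℕ), hlt⟩ : Fin n) = e.symm ⟨a, h⟩ :=
          Fin.ext (by simp)
        rw [h6]; simp
      rw [harg]
      simp
    · rw [dif_neg h, Option.bind_none]
      rw [mem_s, Option.isSome_iff_exists] at h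
      push_neg at h
      cases hfa : f a with
      | none => rfl
      | some y => exact absurd hfa (h y)
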